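/- arXiv:1912.04524 — 2 statements merged into one kernel-verified Lean document; each statement's English description precedes it below -/
import Mathlib

section
/- Let W, W̃ ∈ ℝ^{n×n} be symmetric matrices and ε ≥ 0. The following are equivalent: (1) W̃ is a unit-circle ε-approximation of W; (2) W̃ is an undirected ε-approximation of W and −W̃ is an undirected ε-approximation of −W; (3) for all x ∈ ℝ^n, |x^⊤(W − W̃)x| ≤ ε·(‖x‖² − |x^⊤Wx|). -/
open Matrix

noncomputable section

/-- The sesquilinear form `x* A y`. -/
def sesq {m : Type*} [Fintype m] (A : Matrix m m ℂ) (x y : m → ℂ) : ℂ :=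
  star x ⬝ᵥ (A *ᵥ y)

/-- The squared Euclidean norm of a complex vector. -/
def vnormSq {m : Type*} [Fintype m] (x : m → ℂ) : ℝ :=
  ∑ i, Complex.normSq (x i)

/-- `W̃` is a *unit-circle ε-approximation* of `W`:
for all complex `x, y`, `|x*(W − W̃)y| ≤ (ε/2)(‖x‖² + ‖y‖² − |x*Wx + y*Wy|)`. -/
def UnitCircleApprox {m : Type*} [Fintype m] (ε : ℝ) (W Wt : Matrix m m ℂ) : Prop :=
  ∀ x y : m → ℂ,
    ‖sesq (W - Wt) x y‖ ≤
      ε / 2 * (vnormSq x + vnormSq y - ‖sesq W x x + sesq W y y‖)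

/-- `W̃` is an *undirected ε-approximation* of `W` (for symmetric real matrices):
for all real `x`, `|xᵀ(W − W̃)x| ≤ ε(‖x‖² − xᵀWx)`. -/
def UndirApprox {m : Type*} [Fintype m] (ε : ℝ) (W Wt : Matrix m m ℝ) : Prop :=
  ∀ x : m → ℝ, |x ⬝ᵥ ((W - Wt) *ᵥ x)| ≤ ε * (x ⬝ᵥ x - x ⬝ᵥ (W *ᵥ x))

section Aux
variable {m : Type*} [Fintype m]

lemma dot_symm (M : Matrix m m ℝ) (hM : M.IsSymm) (x y : m → ℝ) :
    x ⬝ᵥ M *ᵥ y = y ⬝ᵥ M *ᵥ x := by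
  simp only [dotProduct, mulVec, Finset.mul_sum]
  rw [Finset.sum_comm]
  refine Finset.sum_congr rfl fun j _ => Finset.sum_congr rfl fun i _ => ?_
  linear_combination (-(x i * y j)) * (hM.apply i j)

lemma sesq_re (M : Matrix m m ℝ) (x y : m → ℂ) :
    (sesq (M.map Complex.ofReal) x y).re =
      (fun i => (x i).re) ⬝ᵥ M *ᵥ (fun i => (y i).re)
        + (fun i => (x i).im) ⬝ᵥ M *ᵥ (fun i => (y i).im) := by
  simp only [sesq, dotProduct, mulVec, Matrix.map_apply, Complex.re_sum,
    Complex.mul_re, Complex.im_sum, Pi.star_apply, Complex.star_def,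
    Complex.conj_re, Complex.conj_im, Complex.ofReal_re, Complex.ofReal_im]
  rw [← Finset.sum_add_distrib]
  refine Finset.sum_congr rfl fun i _ => ?_
  simp only [Complex.re_sum, Complex.im_sum, Complex.mul_re, Complex.mul_im,
    Complex.ofReal_re, Complex.ofReal_im, zero_mul, sub_zero, zero_add,
    Finset.mul_sum, neg_mul, Finset.sum_neg_distrib]
  ring_nf

lemma sesq_im (M : Matrix m m ℝ) (x y : m → ℂ) :
    (sesq (M.map Complex.ofReal) x y).im =
      (fun i => (x i).re) ⬝ᵥ M *ᵥ (fun i => (y i).im)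
        - (fun i => (x i).im) ⬝ᵥ M *ᵥ (fun i => (y i).re) := by
  simp only [sesq, dotProduct, mulVec, Matrix.map_apply, Complex.im_sum,
    Complex.mul_im, Pi.star_apply, Complex.star_def,
    Complex.conj_re, Complex.conj_im]
  rw [← Finset.sum_sub_distrib]
  refine Finset.sum_congr rfl fun i _ => ?_
  simp only [Complex.re_sum, Complex.im_sum, Complex.mul_re, Complex.mul_im,
    Complex.ofReal_re, Complex.ofReal_im, zero_mul, sub_zero, zero_add,
    Finset.mul_sum, neg_mul, Finset.sum_neg_distrib]
  ring_nf

lemma vnormSq_eq (x : m → ℂ) :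
    vnormSq x = (fun i => (x i).re) ⬝ᵥ (fun i => (x i).re)
      + (fun i => (x i).im) ⬝ᵥ (fun i => (x i).im) := by
  simp only [vnormSq, Complex.normSq_apply, dotProduct]
  rw [← Finset.sum_add_distrib]

lemma sesq_smul_left (A : Matrix m m ℂ) (x y : m → ℂ) (c : ℂ) :
    sesq A (c • x) y = (starRingEnd ℂ) c * sesq A x y := by
  simp [sesq, star_smul, smul_dotProduct, smul_eq_mul]

lemma sesq_smul_right (A : Matrix m m ℂ) (x y : m → ℂ) (c : ℂ) :
    sesq A x (c • y) = c * sesq A x y := by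
  simp [sesq, Matrix.mulVec_smul, dotProduct_smul, smul_eq_mul]

lemma sesq_real (M : Matrix m m ℝ) (x y : m → ℝ) :
    sesq (M.map Complex.ofReal) (fun i => (x i : ℂ)) (fun i => (y i : ℂ))
      = ((x ⬝ᵥ M *ᵥ y : ℝ) : ℂ) := by
  simp only [sesq, dotProduct, mulVec, Matrix.map_apply, Pi.star_apply,
    Complex.star_def, Complex.conj_ofReal]
  push_cast
  rfl

lemma expand_add (M : Matrix m m ℝ) (u v : m → ℝ) :
    (u + v) ⬝ᵥ M *ᵥ (u + v) =
      u ⬝ᵥ M *ᵥ u + u ⬝ᵥ M *ᵥ v + v ⬝ᵥ M *ᵥ u + v ⬝ᵥ M *ᵥ v := by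
  simp [Matrix.mulVec_add, dotProduct_add, add_dotProduct]; ring

lemma expand_sub (M : Matrix m m ℝ) (u v : m → ℝ) :
    (u - v) ⬝ᵥ M *ᵥ (u - v) =
      u ⬝ᵥ M *ᵥ u - u ⬝ᵥ M *ᵥ v - v ⬝ᵥ M *ᵥ u + v ⬝ᵥ M *ᵥ v := by
  simp [Matrix.mulVec_sub, dotProduct_sub, sub_dotProduct]; ring

lemma expand_dot_add (u v : m → ℝ) :
    (u + v) ⬝ᵥ (u + v) = u ⬝ᵥ u + u ⬝ᵥ v + v ⬝ᵥ u + v ⬝ᵥ v := by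
  simp [dotProduct_add, add_dotProduct]; ring

lemma expand_dot_sub (u v : m → ℝ) :
    (u - v) ⬝ᵥ (u - v) = u ⬝ᵥ u - u ⬝ᵥ v - v ⬝ᵥ u + v ⬝ᵥ v := by
  simp [dotProduct_sub, sub_dotProduct]; ring

/-- real quadratic form of a complexified symmetric matrix is real. -/
lemma sesq_self_im (M : Matrix m m ℝ) (hM : M.IsSymm) (x : m → ℂ) :
    (sesq (M.map Complex.ofReal) x x).im = 0 := by
  rw [sesq_im]
  rw [dot_symm M hM]
  ring

end Aux

set_option maxHeartbeats 2000000 in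
/-- For symmetric real `W, W̃` and `ε ≥ 0`, the following are
equivalent: (1) `W̃` is a unit-circle ε-approximation of `W`; (2) `W̃ ≈_ε W` and
`−W̃ ≈_ε −W` (undirected); (3) `∀ x, |xᵀ(W − W̃)x| ≤ ε(‖x‖² − |xᵀWx|)`. -/
theorem real_symmetric_unitCircle_equiv {n : ℕ} (ε : ℝ) (hε : 0 ≤ ε)
    (W Wt : Matrix (Fin n) (Fin n) ℝ) (hW : W.IsSymm) (hWt : Wt.IsSymm) :
    List.TFAE
      [UnitCircleApprox ε (W.map Complex.ofReal) (Wt.map Complex.ofReal),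
       UndirApprox ε W Wt ∧ UndirApprox ε (-W) (-Wt),
       ∀ x : Fin n → ℝ,
         |x ⬝ᵥ ((W - Wt) *ᵥ x)| ≤ ε * (x ⬝ᵥ x - |x ⬝ᵥ (W *ᵥ x)|)] := by
  have hmap : W.map Complex.ofReal - Wt.map Complex.ofReal
      = (W - Wt).map Complex.ofReal := by
    ext i j; simp [Matrix.map_apply]
  have hneg1 : ∀ x : Fin n → ℝ,
      x ⬝ᵥ (((-W) - (-Wt)) *ᵥ x) = -(x ⬝ᵥ ((W - Wt) *ᵥ x)) := by
    intro x
    have : (-W) - (-Wt) = -(W - Wt) := by abel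
    rw [this, Matrix.neg_mulVec, dotProduct_neg]
  have hneg2 : ∀ x : Fin n → ℝ, x ⬝ᵥ ((-W) *ᵥ x) = -(x ⬝ᵥ (W *ᵥ x)) := by
    intro x; rw [Matrix.neg_mulVec, dotProduct_neg]
  tfae_have 1 → 3
  | h1 => by
    intro x
    have h := h1 (fun i => (x i : ℂ)) (fun i => (x i : ℂ))
    rw [hmap, sesq_real, sesq_real, Complex.norm_real, Real.norm_eq_abs] at h
    have hv : vnormSq (fun i => (x i : ℂ)) = x ⬝ᵥ x := by
      simp [vnormSq, Complex.normSq_ofReal, dotProduct]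
    rw [hv] at h
    have habs : ‖((x ⬝ᵥ W *ᵥ x : ℝ) : ℂ) + ((x ⬝ᵥ W *ᵥ x : ℝ) : ℂ)‖
        = 2 * |x ⬝ᵥ W *ᵥ x| := by
      rw [← Complex.ofReal_add, Complex.norm_real, Real.norm_eq_abs, ← two_mul, abs_mul, abs_two]
    rw [habs] at h
    linarith
  tfae_have 3 → 2
  | h3 => by
    constructor
    · intro x
      have h := h3 x
      have h2 : ε * (x ⬝ᵥ W *ᵥ x) ≤ ε * |x ⬝ᵥ W *ᵥ x| :=
        mul_le_mul_of_nonneg_left (le_abs_self _) hε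
      linarith
    · intro x
      have h := h3 x
      have h2 : ε * (-(x ⬝ᵥ W *ᵥ x)) ≤ ε * |x ⬝ᵥ W *ᵥ x| :=
        mul_le_mul_of_nonneg_left (neg_le_abs _) hε
      rw [hneg1 x, abs_neg, hneg2 x]
      linarith
  tfae_have 2 → 3
  | ⟨h, h'⟩ => by
    intro x
    have h1 := h x
    have h2 := h' x
    rw [hneg1 x, abs_neg, hneg2 x] at h2
    rcases abs_cases (x ⬝ᵥ W *ᵥ x) with ⟨he, _⟩ | ⟨he, _⟩ <;> rw [he] <;> linarith
  tfae_have 3 → 1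
  | h3 => by
    intro z y
    rw [hmap]
    set A : Matrix (Fin n) (Fin n) ℝ := W - Wt with hA
    have hAsymm : A.IsSymm := hW.sub hWt
    set α : ℂ := sesq (A.map Complex.ofReal) z y with hα
    set c : ℂ := if α = 0 then 1 else α / ((‖α‖ : ℝ) : ℂ) with hc
    have hcns : Complex.normSq c = 1 := by
      by_cases h : α = 0
      · simp [hc, h]
      · rw [hc, if_neg h, Complex.normSq_div, Complex.normSq_ofReal,
          Complex.normSq_eq_norm_sq]
        have : ‖α‖ ≠ 0 := by simpa using h
        field_simp
    set z' : Fin n → ℂ := c • z with hz'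
    have hphase : sesq (A.map Complex.ofReal) z' y = ((‖α‖ : ℝ) : ℂ) := by
      rw [hz', sesq_smul_left, ← hα]
      by_cases h : α = 0
      · simp [hc, h]
      · rw [hc, if_neg h, map_div₀, Complex.conj_ofReal]
        have h0 : ((‖α‖ : ℝ) : ℂ) ≠ 0 := by
          simpa using (norm_ne_zero_iff.mpr h)
        field_simp
        rw [mul_comm]
        rw [Complex.mul_conj, Complex.normSq_eq_norm_sq]
        push_cast
        ring
    set p : Fin n → ℝ := fun i => (z' i).re with hp
    set q : Fin n → ℝ := fun i => (z' i).im with hq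
    set r : Fin n → ℝ := fun i => (y i).re with hr
    set s : Fin n → ℝ := fun i => (y i).im with hs
    have hre : ‖α‖ = p ⬝ᵥ A *ᵥ r + q ⬝ᵥ A *ᵥ s := by
      have := congrArg Complex.re hphase
      rw [sesq_re] at this
      simpa using this.symm
    -- quadratic forms of W
    have hWz' : sesq (W.map Complex.ofReal) z' z' = sesq (W.map Complex.ofReal) z z := by
      rw [hz', sesq_smul_left, sesq_smul_right, ← mul_assoc]
      rw [show (starRingEnd ℂ) c * c = ((Complex.normSq c : ℝ) : ℂ) by
            rw [mul_comm, Complex.mul_conj], hcns]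
      simp
    have hWz : (sesq (W.map Complex.ofReal) z z).re = p ⬝ᵥ W *ᵥ p + q ⬝ᵥ W *ᵥ q := by
      rw [← hWz', sesq_re]
    have hWy : (sesq (W.map Complex.ofReal) y y).re = r ⬝ᵥ W *ᵥ r + s ⬝ᵥ W *ᵥ s := by
      rw [sesq_re]
    have hvz : vnormSq z = p ⬝ᵥ p + q ⬝ᵥ q := by
      have : vnormSq z' = vnormSq z := by
        simp [hz', vnormSq, Complex.normSq_mul, hcns, Pi.smul_apply, smul_eq_mul]
      rw [← this, vnormSq_eq]
    have hvy : vnormSq y = r ⬝ᵥ r + s ⬝ᵥ s := by rw [vnormSq_eq]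
    set R : ℝ := (sesq (W.map Complex.ofReal) z z).re + (sesq (W.map Complex.ofReal) y y).re with hR
    set t : ℝ := if 0 ≤ R then 1 else -1 with ht
    have habsR : ‖sesq (W.map Complex.ofReal) z z + sesq (W.map Complex.ofReal) y y‖
        = t * R := by
      have hz0 := sesq_self_im W hW z
      have hy0 := sesq_self_im W hW y
      have : sesq (W.map Complex.ofReal) z z + sesq (W.map Complex.ofReal) y y
          = ((R : ℝ) : ℂ) := by
        apply Complex.ext <;> simp [hR, hz0, hy0]
      rw [this, Complex.norm_real, Real.norm_eq_abs]
      rw [ht]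
      rcases le_or_gt 0 R with hh | hh
      · rw [if_pos hh, one_mul, abs_of_nonneg hh]
      · rw [if_neg (not_le.mpr hh), abs_of_neg hh]; ring
    have ht1 : ∀ w : ℝ, t * w ≤ |w| := by
      intro w
      rw [ht]
      rcases le_or_gt 0 R with hh | hh
      · rw [if_pos hh, one_mul]; exact le_abs_self w
      · rw [if_neg (not_le.mpr hh)]
        have := neg_abs_le w
        linarith
    have key : ∀ v : Fin n → ℝ,
        (v ⬝ᵥ A *ᵥ v + t * ε * (v ⬝ᵥ W *ᵥ v) ≤ ε * (v ⬝ᵥ v)) ∧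
        (-(v ⬝ᵥ A *ᵥ v) + t * ε * (v ⬝ᵥ W *ᵥ v) ≤ ε * (v ⬝ᵥ v)) := by
      intro v
      have h := h3 v
      obtain ⟨hl, hr'⟩ := abs_le.mp h
      have hw : ε * (t * (v ⬝ᵥ W *ᵥ v)) ≤ ε * |v ⬝ᵥ W *ᵥ v| :=
        mul_le_mul_of_nonneg_left (ht1 _) hε
      constructor <;> nlinarith [hw, hl, hr']
    have k1 := (key (p + r)).1
    have k2 := (key (q + s)).1
    have k3 := (key (p - r)).2
    have k4 := (key (q - s)).2
    rw [expand_add A p r, expand_add W p r, expand_dot_add p r] at k1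
    rw [expand_add A q s, expand_add W q s, expand_dot_add q s] at k2
    rw [expand_sub A p r, expand_sub W p r, expand_dot_sub p r] at k3
    rw [expand_sub A q s, expand_sub W q s, expand_dot_sub q s] at k4
    have sA1 : r ⬝ᵥ A *ᵥ p = p ⬝ᵥ A *ᵥ r := dot_symm A hAsymm r p
    have sA2 : s ⬝ᵥ A *ᵥ q = q ⬝ᵥ A *ᵥ s := dot_symm A hAsymm s q
    have sW1 : r ⬝ᵥ W *ᵥ p = p ⬝ᵥ W *ᵥ r := dot_symm W hW r p
    have sW2 : s ⬝ᵥ W *ᵥ q = q ⬝ᵥ W *ᵥ s := dot_symm W hW s q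
    rw [habsR, hvz, hvy, hre]
    rw [hR, hWz, hWy]
    nlinarith [k1, k2, k3, k4, sA1, sA2, sW1, sW2]
  tfae_finish

end
end

section
/- Let W ∈ ℝ^{n×n} be doubly stochastic and suppose ‖Wv‖ ≤ ε·‖v‖ for every v ∈ ℂ^n orthogonal to the all-ones vector. Let J be the n×n matrix with every entry 1/n. Then the 2n×2n block matrix with blocks [[0, 0], [W, 0]] is a unit-circle ε-approximation of the 2n×2n block matrix with blocks [[0, 0], [J, 0]]. -/
open Matrix

noncomputable section

/-- Cauchy–Schwarz for the complex dot product. -/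
lemma aux_cs {n : ℕ} (w u : Fin n → ℂ) :
    ‖star w ⬝ᵥ u‖ ≤ Real.sqrt (vnormSq w) * Real.sqrt (vnormSq u) := by
  set w' : EuclideanSpace ℂ (Fin n) := (WithLp.equiv 2 (Fin n → ℂ)).symm w with hw'
  set u' : EuclideanSpace ℂ (Fin n) := (WithLp.equiv 2 (Fin n → ℂ)).symm u with hu'
  have h := norm_inner_le_norm (𝕜 := ℂ) w' u'
  have h1 : ‖w'‖ = Real.sqrt (vnormSq w) := by
    rw [EuclideanSpace.norm_eq]; congr 1; simp [vnormSq, Complex.sq_norm, hw']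
  have h2 : ‖u'‖ = Real.sqrt (vnormSq u) := by
    rw [EuclideanSpace.norm_eq]; congr 1; simp [vnormSq, Complex.sq_norm, hu']
  have h3 : (inner (𝕜 := ℂ) w' u') = star w ⬝ᵥ u := by
    simp [PiLp.inner_apply, dotProduct, mul_comm, hw', hu']
  rw [h3, h1, h2] at h
  exact h

lemma aux_vnormSq_nonneg {m : Type*} [Fintype m] (x : m → ℂ) : 0 ≤ vnormSq x :=
  Finset.sum_nonneg fun i _ => Complex.normSq_nonneg _

/-- Pythagoras: removing the mean component. -/
lemma aux_pyth {n : ℕ} (hn : (n : ℝ) ≠ 0) (z : Fin n → ℂ) :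
    vnormSq (fun i => z i - (∑ j, z j) / n) =
      vnormSq z - Complex.normSq (∑ j, z j) / n := by
  have key : ∀ a d : ℂ, Complex.normSq (a - d) =
      Complex.normSq a - 2 * ((starRingEnd ℂ) d * a).re + Complex.normSq d := by
    intro a d
    simp [Complex.normSq_apply, Complex.mul_re, Complex.sub_re, Complex.sub_im]
    ring
  set s := ∑ j, z j with hs
  have h1 : vnormSq (fun i => z i - s / n) =
      vnormSq z - 2 * ((starRingEnd ℂ) (s / n) * s).re + n * Complex.normSq (s / n) := by
    simp only [vnormSq, key]
    rw [Finset.sum_add_distrib, Finset.sum_sub_distrib, Finset.sum_const,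
      Finset.card_univ, Fintype.card_fin, nsmul_eq_mul]
    congr 1
    congr 1
    rw [← Finset.mul_sum, ← Complex.re_sum]
    congr 2
    rw [← Finset.mul_sum, ← hs]
  have h2 : ((starRingEnd ℂ) (s / n) * s).re = Complex.normSq s / n := by
    rw [map_div₀, div_mul_eq_mul_div, mul_comm, Complex.mul_conj]
    have : ((n : ℂ)) = ((n : ℝ) : ℂ) := by push_cast; ring
    rw [this, Complex.conj_ofReal, ← Complex.ofReal_div, Complex.ofReal_re]
  have h3 : Complex.normSq (s / n) = Complex.normSq s / n ^ 2 := by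
    rw [map_div₀, Complex.normSq_natCast]
    push_cast; ring
  rw [h1, h2, h3]
  field_simp
  ring

/-- Cauchy–Schwarz against the all-ones vector. -/
lemma aux_sq_sum {n : ℕ} (z : Fin n → ℂ) :
    (‖∑ i, z i‖) ^ 2 ≤ n * vnormSq z := by
  have h1 : ‖∑ i, z i‖ ≤ ∑ i, ‖z i‖ := by
    simpa using norm_sum_le Finset.univ z
  have h2 : (∑ i, ‖z i‖) ^ 2 ≤ (n : ℝ) * ∑ i, (‖z i‖) ^ 2 := by
    simpa using sq_sum_le_card_mul_sum_sq (s := Finset.univ) (f := fun i => ‖z i‖)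
  have h3 : (∑ i, (‖z i‖) ^ 2) = vnormSq z := by
    simp [vnormSq, Complex.sq_norm]
  calc (‖∑ i, z i‖) ^ 2
      ≤ (∑ i, ‖z i‖) ^ 2 := by
        apply pow_le_pow_left₀ (norm_nonneg _) h1
    _ ≤ (n : ℝ) * vnormSq z := by rw [← h3]; exact h2

lemma aux_sesq_sub {m : Type*} [Fintype m] (A B : Matrix m m ℂ) (x y : m → ℂ) :
    sesq (A - B) x y = sesq A x y - sesq B x y := by
  simp [sesq, Matrix.sub_mulVec, dotProduct_sub]

/-- Reduction of the block sesquilinear form. -/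
lemma aux_sesq_block {n : ℕ} (M : Matrix (Fin n) (Fin n) ℂ) (x y : Fin n ⊕ Fin n → ℂ) :
    sesq (fromBlocks 0 0 M 0) x y = star (x ∘ Sum.inr) ⬝ᵥ (M *ᵥ (y ∘ Sum.inl)) := by
  simp [sesq, dotProduct, mulVec, fromBlocks, Fintype.sum_sum_type, Function.comp]

lemma aux_vnormSq_split {n : ℕ} (x : Fin n ⊕ Fin n → ℂ) :
    vnormSq x = vnormSq (x ∘ Sum.inl) + vnormSq (x ∘ Sum.inr) := by
  simp [vnormSq, Fintype.sum_sum_type, Function.comp]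

/-- If `W` is doubly stochastic with `‖Wv‖ ≤ ε‖v‖` for all
`v ⊥ 1`, then the block matrix `[[0,0],[W,0]]` is a unit-circle ε-approximation
of `[[0,0],[J,0]]`, where `J` has every entry `1/n`. -/
theorem bipartite_expander_unitCircle_approx {n : ℕ} (ε : ℝ) (hε : 0 ≤ ε)
    (W : Matrix (Fin n) (Fin n) ℝ)
    (hnn : ∀ i j, 0 ≤ W i j) (hrow : ∀ i, ∑ j, W i j = 1) (hcol : ∀ j, ∑ i, W i j = 1)
    (hexp : ∀ v : Fin n → ℂ, (∑ i, v i) = 0 →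
      Real.sqrt (vnormSq ((W.map Complex.ofReal) *ᵥ v)) ≤ ε * Real.sqrt (vnormSq v)) :
    UnitCircleApprox ε
      (Matrix.fromBlocks 0 0 (Matrix.of fun (_ _ : Fin n) => (1 / (n : ℂ))) 0)
      (Matrix.fromBlocks 0 0 (W.map Complex.ofReal) 0) := by
  intro x y
  by_cases hn : n = 0
  · subst hn
    simp [sesq, vnormSq, dotProduct, Fintype.sum_sum_type]
  have hnR : (0 : ℝ) < n := by positivity
  have hnR' : (n : ℝ) ≠ 0 := ne_of_gt hnR
  have hnC : (n : ℂ) ≠ 0 := by exact_mod_cast (Nat.cast_ne_zero (R := ℂ)).mpr hn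
  set J : Matrix (Fin n) (Fin n) ℂ := Matrix.of fun (_ _ : Fin n) => (1 / (n : ℂ)) with hJ
  set Wc : Matrix (Fin n) (Fin n) ℂ := W.map Complex.ofReal with hWc
  set x₁ := x ∘ Sum.inl with hx₁
  set x₂ := x ∘ Sum.inr with hx₂
  set y₁ := y ∘ Sum.inl with hy₁
  set y₂ := y ∘ Sum.inr with hy₂
  set a₁ := ∑ i, x₁ i with ha₁
  set a₂ := ∑ i, x₂ i with ha₂
  set b₁ := ∑ i, y₁ i with hb₁
  set b₂ := ∑ i, y₂ i with hb₂
  set v : Fin n → ℂ := fun i => y₁ i - b₁ / n with hv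
  set w : Fin n → ℂ := fun i => x₂ i - a₂ / n with hw
  -- basic mulVec facts
  have hJmul : ∀ z : Fin n → ℂ, J *ᵥ z = fun _ => (∑ i, z i) / n := by
    intro z
    funext i
    simp [hJ, mulVec, dotProduct, Finset.sum_div, div_eq_mul_inv, mul_comm, Finset.sum_mul]
  have hWconst : ∀ c : ℂ, Wc *ᵥ (fun _ => c) = fun _ => c := by
    intro c
    funext i
    have := hrow i
    simp [hWc, mulVec, dotProduct, ← Finset.sum_mul]
    rw [← Complex.ofReal_sum, this]
    simp
  have hWcol : ∀ u : Fin n → ℂ, ∑ i, (Wc *ᵥ u) i = ∑ j, u j := by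
    intro u
    simp only [hWc, mulVec, dotProduct, Matrix.map_apply]
    rw [Finset.sum_comm]
    refine Finset.sum_congr rfl fun j _ => ?_
    rw [← Finset.sum_mul, ← Complex.ofReal_sum, hcol j, Complex.ofReal_one, one_mul]
  have hsumv : ∑ i, v i = 0 := by
    simp only [hv, Finset.sum_sub_distrib, Finset.sum_const, Finset.card_univ,
      Fintype.card_fin, nsmul_eq_mul, ← hb₁]
    field_simp
    ring
  -- star x₂ against a vector with zero sum equals star w against it
  have hstar : ∀ u : Fin n → ℂ, (∑ i, u i) = 0 → star x₂ ⬝ᵥ u = star w ⬝ᵥ u := by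
    intro u hu
    have : star x₂ ⬝ᵥ u - star w ⬝ᵥ u = (starRingEnd ℂ) (a₂ / n) * ∑ i, u i := by
      simp only [dotProduct, Pi.star_apply, ← Finset.sum_sub_distrib, Finset.mul_sum]
      refine Finset.sum_congr rfl fun i _ => ?_
      simp only [hw, RCLike.star_def, map_sub]
      ring
    rw [hu, mul_zero] at this
    exact sub_eq_zero.mp this
  have hdotconst : ∀ (z : Fin n → ℂ) (c : ℂ),
      star z ⬝ᵥ (fun _ => c) = (starRingEnd ℂ) (∑ i, z i) * c := by
    intro z c
    simp [dotProduct, Finset.sum_mul, map_sum]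
  -- decompose W *ᵥ y₁
  have hy₁dec : Wc *ᵥ y₁ = (Wc *ᵥ v) + fun _ => b₁ / n := by
    have h0 : y₁ = v + (fun _ => b₁ / n) := by
      funext i; simp [hv]
    rw [h0, Matrix.mulVec_add, hWconst]
  -- the error form
  have hS : sesq (fromBlocks 0 0 J 0 - fromBlocks 0 0 Wc 0) x y
      = -(star w ⬝ᵥ (Wc *ᵥ v)) := by
    rw [aux_sesq_sub, aux_sesq_block, aux_sesq_block, ← hx₂, ← hy₁, hJmul, hy₁dec,
      dotProduct_add, hdotconst, ← ha₂, ← hb₁, hstar (Wc *ᵥ v) (by rw [hWcol, hsumv])]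
    ring
  -- bound on the error form
  have habsS : ‖sesq (fromBlocks 0 0 J 0 - fromBlocks 0 0 Wc 0) x y‖
      ≤ ε / 2 * (vnormSq w + vnormSq v) := by
    rw [hS, norm_neg]
    calc ‖star w ⬝ᵥ (Wc *ᵥ v)‖
        ≤ Real.sqrt (vnormSq w) * Real.sqrt (vnormSq (Wc *ᵥ v)) := aux_cs w _
      _ ≤ Real.sqrt (vnormSq w) * (ε * Real.sqrt (vnormSq v)) :=
          mul_le_mul_of_nonneg_left (hexp v hsumv) (Real.sqrt_nonneg _)
      _ ≤ ε / 2 * (vnormSq w + vnormSq v) := by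
          have h1 : 2 * (Real.sqrt (vnormSq w) * Real.sqrt (vnormSq v))
              ≤ vnormSq w + vnormSq v := by
            nlinarith [sq_nonneg (Real.sqrt (vnormSq w) - Real.sqrt (vnormSq v)),
              Real.sq_sqrt (aux_vnormSq_nonneg w), Real.sq_sqrt (aux_vnormSq_nonneg v)]
          nlinarith [mul_le_mul_of_nonneg_left h1 hε,
            Real.sqrt_nonneg (vnormSq w), Real.sqrt_nonneg (vnormSq v)]
  -- the trace-like term
  have hT : sesq (fromBlocks 0 0 J 0) x x + sesq (fromBlocks 0 0 J 0) y y
      = (starRingEnd ℂ) a₂ * (a₁ / n) + (starRingEnd ℂ) b₂ * (b₁ / n) := by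
    rw [aux_sesq_block, aux_sesq_block, ← hx₁, ← hx₂, ← hy₁, ← hy₂, hJmul, hJmul,
      hdotconst, hdotconst, ← ha₁, ← ha₂, ← hb₁, ← hb₂]
  have hTbound : ‖sesq (fromBlocks 0 0 J 0) x x + sesq (fromBlocks 0 0 J 0) y y‖
      ≤ (‖a₂‖ * ‖a₁‖ + ‖b₂‖ * ‖b₁‖) / n := by
    rw [hT]
    calc ‖(starRingEnd ℂ) a₂ * (a₁ / n) + (starRingEnd ℂ) b₂ * (b₁ / n)‖
        ≤ ‖(starRingEnd ℂ) a₂ * (a₁ / n)‖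
            + ‖(starRingEnd ℂ) b₂ * (b₁ / n)‖ := norm_add_le _ _
      _ = (‖a₂‖ * ‖a₁‖ + ‖b₂‖ * ‖b₁‖) / n := by
          simp [_root_.map_mul, map_div₀, Complex.norm_conj, Complex.norm_natCast]
          ring
  -- Pythagoras
  have hAX : vnormSq w = vnormSq x₂ - Complex.normSq a₂ / n := by
    simpa [← ha₂] using aux_pyth hnR' x₂
  have hBY : vnormSq v = vnormSq y₁ - Complex.normSq b₁ / n := by
    simpa [← hb₁] using aux_pyth hnR' y₁
  have hq := aux_sq_sum x₁
  have hr := aux_sq_sum y₂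
  rw [← ha₁] at hq
  rw [← hb₂] at hr
  -- the key comparison
  have hgoal : vnormSq w + vnormSq v
      ≤ vnormSq x + vnormSq y
        - ‖sesq (fromBlocks 0 0 J 0) x x + sesq (fromBlocks 0 0 J 0) y y‖ := by
    rw [hAX, hBY, aux_vnormSq_split x, aux_vnormSq_split y, ← hx₁, ← hx₂, ← hy₁, ← hy₂]
    set t := ‖sesq (fromBlocks 0 0 J 0) x x + sesq (fromBlocks 0 0 J 0) y y‖
    have ht : t * n ≤ ‖a₂‖ * ‖a₁‖ + ‖b₂‖ * ‖b₁‖ :=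
      (le_div_iff₀ hnR).mp hTbound
    have hp : Complex.normSq a₂ = ‖a₂‖ ^ 2 := (Complex.sq_norm a₂).symm
    have hg : Complex.normSq b₁ = ‖b₁‖ ^ 2 := (Complex.sq_norm b₁).symm
    rw [hp, hg]
    have hu : ‖a₂‖ ^ 2 / n * n = ‖a₂‖ ^ 2 := div_mul_cancel₀ _ hnR'
    have hu' : ‖b₁‖ ^ 2 / n * n = ‖b₁‖ ^ 2 := div_mul_cancel₀ _ hnR'
    nlinarith [ht, hq, hr, hu, hu', hnR,
      sq_nonneg (‖a₂‖ - ‖a₁‖), sq_nonneg (‖b₂‖ - ‖b₁‖),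
      norm_nonneg a₁, norm_nonneg a₂, norm_nonneg b₁, norm_nonneg b₂,
      aux_vnormSq_nonneg x₁, aux_vnormSq_nonneg y₂]
  calc ‖sesq (fromBlocks 0 0 J 0 - fromBlocks 0 0 Wc 0) x y‖
      ≤ ε / 2 * (vnormSq w + vnormSq v) := habsS
    _ ≤ ε / 2 * (vnormSq x + vnormSq y
        - ‖sesq (fromBlocks 0 0 J 0) x x + sesq (fromBlocks 0 0 J 0) y y‖) :=
        mul_le_mul_of_nonneg_left hgoal (by positivity)

end
end
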